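/- Let Z(P) ⊂ ℝ³ be the zero set of a nonzero polynomial P of degree at most D, with irreducible components Z_j = Z(P_j) where P = ∏ P_j. Let 𝔏 be a set of L lines in ℝ³, S a finite set of points, and r ≥ 2. If a point x ∈ S ∩ Z_j lies on at least r lines of 𝔏 but on fewer than ⌈(9/10)r⌉ lines of 𝔏 contained in Z_j, then x lies on at least r/10 lines of 𝔏 not contained in Z_j; consequently |(S ∩ Z_j) ∖ P_{r'}(𝔏_{Z_j})| ≤ 10·r^{-1}·(deg Z_j)·L, where r' = ⌈(9/10)r⌉, 𝔏_{Z_j} is the set of lines of 𝔏 contained in Z_j, and P_{r'} denotes r'-rich points. -/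

import Mathlib

def IsLine (s : Set (Fin 3 → ℝ)) : Prop :=
  ∃ a v : Fin 3 → ℝ, v ≠ 0 ∧ s = {x | ∃ t : ℝ, x = a + t • v}

def zeroSet (Q : MvPolynomial (Fin 3) ℝ) : Set (Fin 3 → ℝ) :=
  {x | MvPolynomial.eval x Q = 0}

open Polynomial in
lemma line_inter (Q : MvPolynomial (Fin 3) ℝ) (ℓ : Set (Fin 3 → ℝ))
    (hℓ : IsLine ℓ) (h : ¬ ℓ ⊆ zeroSet Q) :
    (ℓ ∩ zeroSet Q).Finite ∧ (ℓ ∩ zeroSet Q).ncard ≤ Q.totalDegree := by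
  obtain ⟨a, v, hv, rfl⟩ := hℓ
  set q : Polynomial ℝ := MvPolynomial.eval₂ Polynomial.C
    (fun i => Polynomial.C (a i) + Polynomial.C (v i) * Polynomial.X) Q with hq
  have heval : ∀ t : ℝ, q.eval t = MvPolynomial.eval (a + t • v) Q := by
    intro t
    have h1 := MvPolynomial.eval₂_comp_left (Polynomial.evalRingHom t) Polynomial.C
      (fun i => Polynomial.C (a i) + Polynomial.C (v i) * Polynomial.X) Q
    have hC : (Polynomial.evalRingHom t).comp Polynomial.C = RingHom.id ℝ := by
      ext c; simp
    have hg : (⇑(Polynomial.evalRingHom t) ∘ fun i => Polynomial.C (a i) + Polynomial.C (v i) * X)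
        = (a + t • v) := by
      funext i
      simp only [Function.comp_apply, Polynomial.coe_evalRingHom, Polynomial.eval_add,
        Polynomial.eval_C, Polynomial.eval_mul, Polynomial.eval_X, Pi.add_apply, Pi.smul_apply,
        smul_eq_mul]
      ring
    rw [hq, ← Polynomial.coe_evalRingHom, h1, hC, hg]
    rfl
  -- q ≠ 0
  have hqne : q ≠ 0 := by
    intro h0
    apply h
    intro x hx
    obtain ⟨t, rfl⟩ := hx
    have := heval t
    rw [h0] at this
    simpa [zeroSet] using this.symm
  -- degree bound
  have hdeg : q.natDegree ≤ Q.totalDegree := by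
    rw [hq, MvPolynomial.eval₂_eq']
    apply Polynomial.natDegree_sum_le_of_forall_le
    intro d hd
    refine (Polynomial.natDegree_C_mul_le _ _).trans ?_
    refine (Polynomial.natDegree_prod_le _ _).trans ?_
    have hfac : ∀ i : Fin 3, ((Polynomial.C (a i) + Polynomial.C (v i) * X) ^ d i).natDegree ≤ d i := by
      intro i
      refine Polynomial.natDegree_pow_le.trans ?_
      have h1 : (Polynomial.C (a i) + Polynomial.C (v i) * X).natDegree ≤ 1 := by
        refine (Polynomial.natDegree_add_le _ _).trans ?_
        simp only [Polynomial.natDegree_C, max_le_iff]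
        exact ⟨Nat.zero_le _, (Polynomial.natDegree_C_mul_le _ _).trans (by simp)⟩
      calc d i * (Polynomial.C (a i) + Polynomial.C (v i) * X).natDegree ≤ d i * 1 :=
            Nat.mul_le_mul_left _ h1
        _ = d i := Nat.mul_one _
    calc ∑ i, ((Polynomial.C (a i) + Polynomial.C (v i) * X) ^ d i).natDegree
        ≤ ∑ i, d i := by exact Finset.sum_le_sum fun i _ => hfac i
      _ ≤ Q.totalDegree := by
          have := MvPolynomial.le_totalDegree hd
          rwa [Finsupp.sum_fintype _ _ fun _ => rfl] at this
  -- roots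
  have hroots : {t : ℝ | q.eval t = 0} = ↑q.roots.toFinset := by
    ext t; simp [Polynomial.mem_roots, hqne, Polynomial.IsRoot]
  have hset : {x | ∃ t : ℝ, x = a + t • v} ∩ zeroSet Q
      = (fun t : ℝ => a + t • v) '' {t : ℝ | q.eval t = 0} := by
    ext x
    constructor
    · rintro ⟨⟨t, rfl⟩, hx⟩
      exact ⟨t, by rw [Set.mem_setOf_eq, heval]; exact hx, rfl⟩
    · rintro ⟨t, ht, rfl⟩
      exact ⟨⟨t, rfl⟩, by rw [Set.mem_setOf_eq, heval] at ht; exact ht⟩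
  have hfin : {t : ℝ | q.eval t = 0}.Finite := by rw [hroots]; exact (q.roots.toFinset : Finset ℝ).finite_toSet
  constructor
  · rw [hset]; exact hfin.image _
  · rw [hset]
    refine (Set.ncard_image_le hfin).trans ?_
    rw [hroots, Set.ncard_coe_finset]
    exact (q.roots.toFinset_card_le).trans (q.card_roots'.trans hdeg)

theorem stmt15 (𝔏 : Finset (Set (Fin 3 → ℝ))) (hlines : ∀ ℓ ∈ 𝔏, IsLine ℓ)
    (S : Finset (Fin 3 → ℝ)) (r : ℕ) (hr : 2 ≤ r)
    (hS : ∀ x ∈ S, r ≤ {ℓ | ℓ ∈ 𝔏 ∧ x ∈ ℓ}.ncard)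
    (Pj : MvPolynomial (Fin 3) ℝ) (hPj : Pj ≠ 0) (hirr : Irreducible Pj) :
    (∀ x ∈ S, x ∈ zeroSet Pj →
      {ℓ | ℓ ∈ 𝔏 ∧ ℓ ⊆ zeroSet Pj ∧ x ∈ ℓ}.ncard < ⌈(9 / 10 : ℝ) * r⌉₊ →
      (r : ℝ) / 10 ≤ ({ℓ | ℓ ∈ 𝔏 ∧ ¬ ℓ ⊆ zeroSet Pj ∧ x ∈ ℓ}.ncard : ℝ)) ∧
    (((((S : Set (Fin 3 → ℝ)) ∩ zeroSet Pj) \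
        {x | ⌈(9 / 10 : ℝ) * r⌉₊ ≤ {ℓ | ℓ ∈ 𝔏 ∧ ℓ ⊆ zeroSet Pj ∧ x ∈ ℓ}.ncard}).ncard : ℝ)
      ≤ 10 * (r : ℝ)⁻¹ * (Pj.totalDegree : ℝ) * (𝔏.card : ℝ)) := by
  classical
  have hr0 : (0:ℝ) < r := by
    have : (0:ℕ) < r := by omega
    exact_mod_cast this
  -- conversions from ncard to Finset.card
  have eA : ∀ x : Fin 3 → ℝ, {ℓ | ℓ ∈ 𝔏 ∧ ℓ ⊆ zeroSet Pj ∧ x ∈ ℓ}.ncard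
      = (𝔏.filter fun ℓ => ℓ ⊆ zeroSet Pj ∧ x ∈ ℓ).card := by
    intro x
    rw [← Set.ncard_coe_finset]
    congr 1
    ext ℓ
    simp
  have eB : ∀ x : Fin 3 → ℝ, {ℓ | ℓ ∈ 𝔏 ∧ ¬ ℓ ⊆ zeroSet Pj ∧ x ∈ ℓ}.ncard
      = (𝔏.filter fun ℓ => ¬ ℓ ⊆ zeroSet Pj ∧ x ∈ ℓ).card := by
    intro x
    rw [← Set.ncard_coe_finset]
    congr 1
    ext ℓ
    simp
  have eT : ∀ x : Fin 3 → ℝ, {ℓ | ℓ ∈ 𝔏 ∧ x ∈ ℓ}.ncard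
      = (𝔏.filter fun ℓ => x ∈ ℓ).card := by
    intro x
    rw [← Set.ncard_coe_finset]
    congr 1
    ext ℓ
    simp
  -- Part 1
  have part1 : ∀ x ∈ S, x ∈ zeroSet Pj →
      {ℓ | ℓ ∈ 𝔏 ∧ ℓ ⊆ zeroSet Pj ∧ x ∈ ℓ}.ncard < ⌈(9 / 10 : ℝ) * r⌉₊ →
      (r : ℝ) / 10 ≤ ({ℓ | ℓ ∈ 𝔏 ∧ ¬ ℓ ⊆ zeroSet Pj ∧ x ∈ ℓ}.ncard : ℝ) := by
    intro x hx _ hlt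
    rw [eA] at hlt
    rw [eB]
    have hsplit : ((𝔏.filter fun ℓ => x ∈ ℓ).filter fun ℓ => ℓ ⊆ zeroSet Pj).card
        + ((𝔏.filter fun ℓ => x ∈ ℓ).filter fun ℓ => ¬ ℓ ⊆ zeroSet Pj).card
        = (𝔏.filter fun ℓ => x ∈ ℓ).card :=
      Finset.card_filter_add_card_filter_not _
    have h1 : ((𝔏.filter fun ℓ => x ∈ ℓ).filter fun ℓ => ℓ ⊆ zeroSet Pj)
        = 𝔏.filter fun ℓ => ℓ ⊆ zeroSet Pj ∧ x ∈ ℓ := by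
      ext ℓ; simp [and_comm, and_assoc]
    have h2 : ((𝔏.filter fun ℓ => x ∈ ℓ).filter fun ℓ => ¬ ℓ ⊆ zeroSet Pj)
        = 𝔏.filter fun ℓ => ¬ ℓ ⊆ zeroSet Pj ∧ x ∈ ℓ := by
      ext ℓ; simp [and_comm, and_assoc]
    rw [h1, h2] at hsplit
    have hTr : r ≤ (𝔏.filter fun ℓ => x ∈ ℓ).card := by
      have := hS x hx; rwa [eT] at this
    have hceil : ((⌈(9 / 10 : ℝ) * r⌉₊ : ℝ)) < (9 / 10 : ℝ) * r + 1 :=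
      Nat.ceil_lt_add_one (by positivity)
    have hA : ((𝔏.filter fun ℓ => ℓ ⊆ zeroSet Pj ∧ x ∈ ℓ).card : ℝ) + 1
        ≤ (⌈(9 / 10 : ℝ) * r⌉₊ : ℝ) := by exact_mod_cast hlt
    have hTr' : (r : ℝ) ≤ ((𝔏.filter fun ℓ => x ∈ ℓ).card : ℝ) := by exact_mod_cast hTr
    have hsplit' : ((𝔏.filter fun ℓ => ℓ ⊆ zeroSet Pj ∧ x ∈ ℓ).card : ℝ)
        + ((𝔏.filter fun ℓ => ¬ ℓ ⊆ zeroSet Pj ∧ x ∈ ℓ).card : ℝ)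
        = ((𝔏.filter fun ℓ => x ∈ ℓ).card : ℝ) := by exact_mod_cast hsplit
    linarith
  refine ⟨part1, ?_⟩
  -- Part 2
  set Bf : Finset (Fin 3 → ℝ) := S.filter (fun x => x ∈ zeroSet Pj ∧
    ¬ (⌈(9 / 10 : ℝ) * r⌉₊ ≤ {ℓ | ℓ ∈ 𝔏 ∧ ℓ ⊆ zeroSet Pj ∧ x ∈ ℓ}.ncard)) with hBf
  have hset : (((S : Set (Fin 3 → ℝ)) ∩ zeroSet Pj) \
      {x | ⌈(9 / 10 : ℝ) * r⌉₊ ≤ {ℓ | ℓ ∈ 𝔏 ∧ ℓ ⊆ zeroSet Pj ∧ x ∈ ℓ}.ncard})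
      = ↑Bf := by
    ext x
    simp [hBf, Set.mem_diff, and_assoc]
  rw [hset, Set.ncard_coe_finset]
  -- each x in Bf is on many lines not in Z
  have hmany : ∀ x ∈ Bf, (r : ℝ) / 10
      ≤ ((𝔏.filter fun ℓ => ¬ ℓ ⊆ zeroSet Pj ∧ x ∈ ℓ).card : ℝ) := by
    intro x hx
    rw [hBf, Finset.mem_filter] at hx
    obtain ⟨hxS, hxZ, hnr⟩ := hx
    have := part1 x hxS hxZ (not_le.mp hnr)
    rwa [eB] at this
  -- double counting
  have hdc : ∑ x ∈ Bf, (𝔏.filter fun ℓ => ¬ ℓ ⊆ zeroSet Pj ∧ x ∈ ℓ).card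
      = ∑ ℓ ∈ 𝔏, (Bf.filter fun x => ¬ ℓ ⊆ zeroSet Pj ∧ x ∈ ℓ).card := by
    simp only [Finset.card_filter]
    exact Finset.sum_comm
  have hperline : ∀ ℓ ∈ 𝔏, (Bf.filter fun x => ¬ ℓ ⊆ zeroSet Pj ∧ x ∈ ℓ).card
      ≤ Pj.totalDegree := by
    intro ℓ hℓ
    by_cases hsub : ℓ ⊆ zeroSet Pj
    · simp [hsub]
    · obtain ⟨hfin, hcard⟩ := line_inter Pj ℓ (hlines ℓ hℓ) hsub
      have hss : ((Bf.filter fun x => ¬ ℓ ⊆ zeroSet Pj ∧ x ∈ ℓ) : Set (Fin 3 → ℝ))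
          ⊆ ℓ ∩ zeroSet Pj := by
        intro x hx
        simp only [Finset.coe_filter, Set.mem_setOf_eq, hBf, Finset.mem_filter] at hx
        exact ⟨hx.2.2, hx.1.2.1⟩
      calc (Bf.filter fun x => ¬ ℓ ⊆ zeroSet Pj ∧ x ∈ ℓ).card
          = ((Bf.filter fun x => ¬ ℓ ⊆ zeroSet Pj ∧ x ∈ ℓ) : Set (Fin 3 → ℝ)).ncard :=
            (Set.ncard_coe_finset _).symm
        _ ≤ (ℓ ∩ zeroSet Pj).ncard := Set.ncard_le_ncard hss hfin
        _ ≤ Pj.totalDegree := hcard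
  have hsum : ∑ x ∈ Bf, (𝔏.filter fun ℓ => ¬ ℓ ⊆ zeroSet Pj ∧ x ∈ ℓ).card
      ≤ 𝔏.card * Pj.totalDegree := by
    rw [hdc]
    calc ∑ ℓ ∈ 𝔏, (Bf.filter fun x => ¬ ℓ ⊆ zeroSet Pj ∧ x ∈ ℓ).card
        ≤ ∑ _ℓ ∈ 𝔏, Pj.totalDegree := Finset.sum_le_sum hperline
      _ = 𝔏.card * Pj.totalDegree := by rw [Finset.sum_const, smul_eq_mul]
  have hlow : (Bf.card : ℝ) * ((r : ℝ) / 10)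
      ≤ ∑ x ∈ Bf, ((𝔏.filter fun ℓ => ¬ ℓ ⊆ zeroSet Pj ∧ x ∈ ℓ).card : ℝ) := by
    calc (Bf.card : ℝ) * ((r : ℝ) / 10) = ∑ _x ∈ Bf, ((r : ℝ) / 10) := by
          rw [Finset.sum_const, nsmul_eq_mul]
      _ ≤ _ := Finset.sum_le_sum hmany
  have hhi : (∑ x ∈ Bf, ((𝔏.filter fun ℓ => ¬ ℓ ⊆ zeroSet Pj ∧ x ∈ ℓ).card : ℝ))
      ≤ (𝔏.card : ℝ) * (Pj.totalDegree : ℝ) := by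
    have := hsum
    push_cast
    exact_mod_cast this
  have key : (Bf.card : ℝ) * ((r : ℝ) / 10) ≤ (𝔏.card : ℝ) * (Pj.totalDegree : ℝ) :=
    le_trans hlow hhi
  rw [show (10 : ℝ) * (r : ℝ)⁻¹ * (Pj.totalDegree : ℝ) * (𝔏.card : ℝ)
      = 10 * ((Pj.totalDegree : ℝ) * (𝔏.card : ℝ)) / r by field_simp,
    le_div_iff₀ hr0]
  nlinarith [key]
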